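/- Let H₀ be a bounded self-adjoint operator on ℓ²(ℤᵈ), Λ ⊆ ℤᵈ, V^Λ a bounded self-adjoint operator on ℓ²(Λ), V = Π*V^ΛΠ and H = H₀ + V. Let E be a real number not in the spectrum of H₀ and G₀^Λ(E) = Π(E − H₀)⁻¹Π*. If ‖V^Λ‖·‖G₀^Λ(E)‖ < 1, then E is not an eigenvalue of H. -/

import Mathlib

set_option maxHeartbeats 1000000

noncomputable section

open ContinuousLinearMap

/-- For `H = H₀ + Φ* VΛ Φ` and a real `E` outside the spectrum of `H₀` with
`‖VΛ‖·‖G₀^Λ(E)‖ < 1`, the energy `E` is not an eigenvalue of `H`. -/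
theorem stmt5 (d : ℕ) (Λ : Set (Fin d → ℤ))
    (H₀ : lp (fun _ : Fin d → ℤ => ℂ) 2 →L[ℂ] lp (fun _ : Fin d → ℤ => ℂ) 2)
    (hH₀ : IsSelfAdjoint H₀)
    (Φ : lp (fun _ : Fin d → ℤ => ℂ) 2 →L[ℂ] lp (fun _ : Λ => ℂ) 2)
    (hΦ : ∀ (f : lp (fun _ : Fin d → ℤ => ℂ) 2) (n : Λ), (Φ f) n = f n)
    (hΦcoiso : Φ ∘L ContinuousLinearMap.adjoint Φ = 1)
    (VΛ : lp (fun _ : Λ => ℂ) 2 →L[ℂ] lp (fun _ : Λ => ℂ) 2)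
    (hVΛ : IsSelfAdjoint VΛ)
    (E : ℝ) (hE : (E : ℂ) ∉ spectrum ℂ H₀)
    (hsmall :
      ‖VΛ‖ * ‖Φ ∘L Ring.inverse ((E : ℂ) • 1 - H₀) ∘L ContinuousLinearMap.adjoint Φ‖ < 1) :
    ∀ ψ : lp (fun _ : Fin d → ℤ => ℂ) 2,
      (H₀ + (ContinuousLinearMap.adjoint Φ) ∘L VΛ ∘L Φ) ψ = (E : ℂ) • ψ → ψ = 0 := by
  intro ψ hψ
  set A : lp (fun _ : Fin d → ℤ => ℂ) 2 →L[ℂ] lp (fun _ : Fin d → ℤ => ℂ) 2 :=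
    (E : ℂ) • 1 - H₀ with hAdef
  have hA : IsUnit A := by
    have := spectrum.notMem_iff.mp hE
    rwa [Algebra.algebraMap_eq_smul_one] at this
  set B := Ring.inverse A with hBdef
  have hBA : B * A = 1 := Ring.inverse_mul_cancel A hA
  have hAψ : A ψ = (ContinuousLinearMap.adjoint Φ) (VΛ (Φ ψ)) := by
    have h' : H₀ ψ + (ContinuousLinearMap.adjoint Φ) (VΛ (Φ ψ)) = (E : ℂ) • ψ := by
      simpa using hψ
    simp only [hAdef, sub_apply, smul_apply, one_apply, ContinuousLinearMap.one_apply]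
    rw [← h']; abel
  have hψB : ψ = B ((ContinuousLinearMap.adjoint Φ) (VΛ (Φ ψ))) := by
    have : (B * A) ψ = ψ := by rw [hBA]; simp
    rw [← hAψ]
    calc ψ = (B * A) ψ := this.symm
      _ = B (A ψ) := rfl
  have key : Φ ψ = (Φ ∘L B ∘L ContinuousLinearMap.adjoint Φ) (VΛ (Φ ψ)) := by
    conv_lhs => rw [hψB]
    rfl
  have hnorm : ‖Φ ψ‖ ≤ ‖VΛ‖ * ‖Φ ∘L B ∘L ContinuousLinearMap.adjoint Φ‖ * ‖Φ ψ‖ := by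
    calc ‖Φ ψ‖ = ‖(Φ ∘L B ∘L ContinuousLinearMap.adjoint Φ) (VΛ (Φ ψ))‖ := by rw [← key]
      _ ≤ ‖Φ ∘L B ∘L ContinuousLinearMap.adjoint Φ‖ * ‖VΛ (Φ ψ)‖ := le_opNorm _ _
      _ ≤ ‖Φ ∘L B ∘L ContinuousLinearMap.adjoint Φ‖ * (‖VΛ‖ * ‖Φ ψ‖) := by
          exact mul_le_mul_of_nonneg_left (le_opNorm _ _) (norm_nonneg _)
      _ = ‖VΛ‖ * ‖Φ ∘L B ∘L ContinuousLinearMap.adjoint Φ‖ * ‖Φ ψ‖ := by ring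
  have hΦψ : Φ ψ = 0 := by
    by_contra h
    have hpos : 0 < ‖Φ ψ‖ := norm_pos_iff.mpr h
    have : ‖VΛ‖ * ‖Φ ∘L B ∘L ContinuousLinearMap.adjoint Φ‖ * ‖Φ ψ‖ < 1 * ‖Φ ψ‖ :=
      mul_lt_mul_of_pos_right hsmall hpos
    rw [one_mul] at this
    exact absurd (lt_of_le_of_lt hnorm this) (lt_irrefl _)
  rw [hψB, hΦψ]
  simp
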